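/- Let α > 0, ε > 0 and 0 < s₁ < s₂ < d, and let h_ε^{-1} : ℝ → ℝ be the inverse of h_ε(γ) = γ·exp((γ² − α²)/(2ε)). For i = 1, 2, let C_i ∈ (s_i²/2, d²/2) satisfy ∫_{s_i}^d h_ε^{-1}(C_i − t²/2) dt = 0, and define u_i(y) = ∫_{s_i}^y h_ε^{-1}(C_i − t²/2) dt on [s_i, d]. Then ∫_{s₁}^d u₁(y) dy > ∫_{s₂}^d u₂(y) dy; that is, the total mass Π(s) = ∫_s^d u_s(y) dy of the solution with support [s, d] is strictly decreasing in s. Consequently, if Π(c) > 1 > Π(s) for some s, then there is at most one s* ∈ [c, d) with ∫_{s*}^d u_{s*}(y) dy = 1. -/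

import Mathlib

open MeasureTheory Set

private lemma parts_aux {s d : ℝ} (G : ℝ → ℝ) (hG : Continuous G) :
    (∫ y in s..d, ∫ t in s..y, G t) = ∫ t in s..d, (d - t) * G t := by
  have hF : ∀ x : ℝ, HasDerivAt (fun y => ∫ t in s..y, G t) (G x) x := fun x =>
    intervalIntegral.integral_hasDerivAt_right (hG.intervalIntegrable _ _)
      hG.aestronglyMeasurable.stronglyMeasurableAtFilter hG.continuousAt
  have hv : ∀ x : ℝ, HasDerivAt (fun y => y - d) 1 x := fun x => (hasDerivAt_id x).sub_const d
  have h1 := intervalIntegral.integral_mul_deriv_eq_deriv_mul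
      (a := s) (b := d) (u := fun y => ∫ t in s..y, G t) (v := fun y => y - d)
      (u' := G) (v' := fun _ => 1)
      (fun x _ => hF x) (fun x _ => hv x)
      (hG.intervalIntegrable _ _) (continuous_const.intervalIntegrable _ _)
  simp only [intervalIntegral.integral_same, mul_one, sub_self, mul_zero, zero_mul,
    zero_sub, sub_zero] at h1
  rw [h1, ← intervalIntegral.integral_neg]
  apply intervalIntegral.integral_congr
  intro x _
  ring

set_option maxHeartbeats 1000000 in
theorem stmt_19 (α ε s₁ s₂ d C₁ C₂ : ℝ) (hα : 0 < α) (hε : 0 < ε)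
    (hs₁ : 0 < s₁) (hs₁s₂ : s₁ < s₂) (hs₂d : s₂ < d)
    (h hinv : ℝ → ℝ)
    (hh : ∀ γ : ℝ, h γ = γ * Real.exp ((γ ^ 2 - α ^ 2) / (2 * ε)))
    (hinv_left : Function.LeftInverse hinv h)
    (hinv_right : Function.RightInverse hinv h)
    (hC₁mem : C₁ ∈ Set.Ioo (s₁ ^ 2 / 2) (d ^ 2 / 2))
    (hC₁ : (∫ t in s₁..d, hinv (C₁ - t ^ 2 / 2)) = 0)
    (hC₂mem : C₂ ∈ Set.Ioo (s₂ ^ 2 / 2) (d ^ 2 / 2))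
    (hC₂ : (∫ t in s₂..d, hinv (C₂ - t ^ 2 / 2)) = 0)
    (u₁ u₂ : ℝ → ℝ)
    (hu₁ : ∀ y : ℝ, u₁ y = ∫ t in s₁..y, hinv (C₁ - t ^ 2 / 2))
    (hu₂ : ∀ y : ℝ, u₂ y = ∫ t in s₂..y, hinv (C₂ - t ^ 2 / 2)) :
    (∫ y in s₂..d, u₂ y) < (∫ y in s₁..d, u₁ y) ∧
    ¬((∫ y in s₁..d, u₁ y) = 1 ∧ (∫ y in s₂..d, u₂ y) = 1) := by
  obtain ⟨hC₁lo, hC₁hi⟩ := hC₁mem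
  obtain ⟨hC₂lo, hC₂hi⟩ := hC₂mem
  -- h is strictly monotone
  have hmono : StrictMono h := by
    have hfun : h = fun γ : ℝ => γ * Real.exp ((γ ^ 2 - α ^ 2) / (2 * ε)) := funext hh
    have hd : ∀ γ : ℝ, HasDerivAt h
        (Real.exp ((γ ^ 2 - α ^ 2) / (2 * ε)) * (1 + γ ^ 2 / ε)) γ := by
      intro γ
      rw [hfun]
      have h1 : HasDerivAt (fun γ : ℝ => (γ ^ 2 - α ^ 2) / (2 * ε)) (2 * γ / (2 * ε)) γ := by
        have := ((hasDerivAt_pow 2 γ).sub_const (α ^ 2)).div_const (2 * ε)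
        simpa using this
      have h2 : HasDerivAt (fun γ : ℝ => Real.exp ((γ ^ 2 - α ^ 2) / (2 * ε)))
          (Real.exp ((γ ^ 2 - α ^ 2) / (2 * ε)) * (2 * γ / (2 * ε))) γ := h1.exp
      have h3 : HasDerivAt (fun γ : ℝ => γ * Real.exp ((γ ^ 2 - α ^ 2) / (2 * ε))) _ γ := (hasDerivAt_id γ).mul h2
      convert h3 using 1
      simp only [id]
      field_simp
    apply strictMono_of_deriv_pos
    intro x
    rw [(hd x).deriv]
    have : 0 < 1 + x ^ 2 / ε := by positivity
    positivity
  -- properties of hinv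
  have hf_mono : StrictMono hinv := fun a b hab => by
    rw [← hmono.lt_iff_lt, hinv_right, hinv_right]; exact hab
  have hf0 : hinv 0 = 0 := by
    have h0 : h 0 = 0 := by rw [hh]; ring
    have := hinv_left 0
    rwa [h0] at this
  have hf_cont : Continuous hinv :=
    hf_mono.monotone.continuous_of_surjective hinv_left.surjective
  have hf_nonneg : ∀ x : ℝ, 0 ≤ x → 0 ≤ hinv x := fun x hx => by
    have := hf_mono.monotone hx; rwa [hf0] at this
  have hf_nonpos : ∀ x : ℝ, x ≤ 0 → hinv x ≤ 0 := fun x hx => by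
    have := hf_mono.monotone hx; rwa [hf0] at this
  have hf_pos : ∀ x : ℝ, 0 < x → 0 < hinv x := fun x hx => by
    have := hf_mono hx; rwa [hf0] at this
  -- the two integrands
  set g₁ : ℝ → ℝ := fun t => hinv (C₁ - t ^ 2 / 2) with hg₁def
  set g₂ : ℝ → ℝ := fun t => hinv (C₂ - t ^ 2 / 2) with hg₂def
  have hg₁c : Continuous g₁ := hf_cont.comp (by continuity)
  have hg₂c : Continuous g₂ := hf_cont.comp (by continuity)
  have hs₁d : s₁ < d := hs₁s₂.trans hs₂d
  have hcid : Continuous fun t : ℝ => t := continuous_id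
  have hc1 : Continuous fun t : ℝ => (d - t) * g₁ t := (continuous_const.sub hcid).mul hg₁c
  have hc2 : Continuous fun t : ℝ => (d - t) * g₂ t := (continuous_const.sub hcid).mul hg₂c
  -- total masses via integration by parts
  have hP1 : (∫ y in s₁..d, u₁ y) = ∫ t in s₁..d, (d - t) * g₁ t := by
    rw [show (∫ y in s₁..d, u₁ y) = ∫ y in s₁..d, ∫ t in s₁..y, g₁ t from
      intervalIntegral.integral_congr fun y _ => hu₁ y]
    exact parts_aux g₁ hg₁c
  have hP2 : (∫ y in s₂..d, u₂ y) = ∫ t in s₂..d, (d - t) * g₂ t := by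
    rw [show (∫ y in s₂..d, u₂ y) = ∫ y in s₂..d, ∫ t in s₂..y, g₂ t from
      intervalIntegral.integral_congr fun y _ => hu₂ y]
    exact parts_aux g₂ hg₂c
  -- splitting of the integral of g₁
  set A : ℝ := ∫ t in s₁..s₂, g₁ t with hAdef
  have hsplitA : A + (∫ t in s₂..d, g₁ t) = 0 := by
    rw [hAdef, intervalIntegral.integral_add_adjacent_intervals
      (hg₁c.intervalIntegrable _ _) (hg₁c.intervalIntegrable _ _)]
    exact hC₁
  -- C₁ < C₂
  have hCC : C₁ < C₂ := by
    by_contra hle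
    push_neg at hle
    have hApos : 0 < A := by
      apply intervalIntegral.intervalIntegral_pos_of_pos_on (hg₁c.intervalIntegrable _ _) _ hs₁s₂
      intro x hx
      apply hf_pos
      have hx1 : 0 < x := hs₁.trans hx.1
      have hxx : x ^ 2 ≤ s₂ ^ 2 := pow_le_pow_left₀ hx1.le hx.2.le 2
      linarith
    have hmonoint : (∫ t in s₂..d, g₂ t) ≤ ∫ t in s₂..d, g₁ t := by
      apply intervalIntegral.integral_mono_on hs₂d.le (hg₂c.intervalIntegrable _ _)
        (hg₁c.intervalIntegrable _ _)
      intro x _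
      exact hf_mono.monotone (by linarith)
    rw [hC₂] at hmonoint
    linarith
  -- pointwise g₁ < g₂
  have hglt : ∀ t : ℝ, g₁ t < g₂ t := fun t => hf_mono (by linarith)
  -- A ≥ 0
  have hAnn : 0 ≤ A := by
    rcases le_or_gt C₁ (s₂ ^ 2 / 2) with hc | hc
    · have hnp : (∫ t in s₂..d, g₁ t) ≤ 0 := by
        have hneg : 0 ≤ ∫ t in s₂..d, -g₁ t := by
          apply intervalIntegral.integral_nonneg hs₂d.le
          intro x hx
          rw [neg_nonneg]
          apply hf_nonpos
          have hx2 : s₂ ≤ x := hx.1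
          have hxx : s₂ ^ 2 ≤ x ^ 2 := pow_le_pow_left₀ (hs₁.trans hs₁s₂).le hx2 2
          linarith
        rw [intervalIntegral.integral_neg] at hneg
        linarith
      linarith
    · apply intervalIntegral.integral_nonneg hs₁s₂.le
      intro x hx
      apply hf_nonneg
      have hx1 : 0 ≤ x := (hs₁.le.trans hx.1)
      have hxx : x ^ 2 ≤ s₂ ^ 2 := pow_le_pow_left₀ hx1 hx.2 2
      linarith
  -- key3 : (d - s₂) * A ≤ ∫ t in s₁..s₂, (d - t) * g₁ t
  have key3 : (d - s₂) * A ≤ ∫ t in s₁..s₂, (d - t) * g₁ t := by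
    set τ : ℝ := min (Real.sqrt (2 * C₁)) s₂ with hτdef
    have hτs₂ : τ ≤ s₂ := min_le_right _ _
    have h2C₁ : 0 ≤ 2 * C₁ := by nlinarith [sq_nonneg s₁]
    have hnn : 0 ≤ ∫ t in s₁..s₂, (τ - t) * g₁ t := by
      apply intervalIntegral.integral_nonneg hs₁s₂.le
      intro t ht
      have ht0 : 0 < t := hs₁.trans_le ht.1
      rcases le_or_gt t τ with htτ | htτ
      · apply mul_nonneg (by linarith)
        apply hf_nonneg
        have hts : t ≤ Real.sqrt (2 * C₁) := htτ.trans (min_le_left _ _)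
        have hsq := Real.sq_sqrt h2C₁
        have hxx : t ^ 2 ≤ Real.sqrt (2 * C₁) ^ 2 := pow_le_pow_left₀ ht0.le hts 2
        linarith
      · have hb : g₁ t ≤ 0 := by
          apply hf_nonpos
          have hmin : τ = Real.sqrt (2 * C₁) := by
            rcases min_cases (Real.sqrt (2 * C₁)) s₂ with hm | hm
            · exact hm.1
            · exfalso; rw [hτdef] at htτ; rw [hm.1] at htτ; exact absurd ht.2 (not_le.mpr htτ)
          have hlt : Real.sqrt (2 * C₁) < t := by rw [← hmin]; exact htτ
          have hsq := Real.sq_sqrt h2C₁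
          have hxx : Real.sqrt (2 * C₁) ^ 2 < t ^ 2 :=
            pow_lt_pow_left₀ hlt (Real.sqrt_nonneg _) (by norm_num)
          linarith
        nlinarith [mul_nonneg (neg_nonneg.2 (by linarith : τ - t ≤ 0)) (neg_nonneg.2 hb)]
    have hsum : (∫ t in s₁..s₂, (d - t) * g₁ t)
        = (∫ t in s₁..s₂, (τ - t) * g₁ t) + (d - τ) * A := by
      rw [hAdef, ← intervalIntegral.integral_const_mul, ← intervalIntegral.integral_add (f := fun t => (τ - t) * g₁ t) (g := fun t => (d - τ) * g₁ t)
        (((continuous_const.sub hcid).mul hg₁c : Continuous fun t => (τ - t) * g₁ t).intervalIntegrable _ _)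
        ((continuous_const.mul hg₁c : Continuous fun t => (d - τ) * g₁ t).intervalIntegrable _ _)]
      apply intervalIntegral.integral_congr
      intro x _
      ring
    have : (d - s₂) * A ≤ (d - τ) * A := mul_le_mul_of_nonneg_right (by linarith) hAnn
    linarith
  -- key2 : -(d - s₂) * A < ∫ t in s₂..d, ((d - t) * g₁ t - (d - t) * g₂ t)
  have key2 : -((d - s₂) * A) < ∫ t in s₂..d, ((d - t) * g₁ t - (d - t) * g₂ t) := by
    have hpos : 0 < ∫ t in s₂..d,
        (((d - t) * g₁ t - (d - t) * g₂ t) - (d - s₂) * (g₁ t - g₂ t)) := by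
      apply intervalIntegral.intervalIntegral_pos_of_pos_on
        (f := fun t => ((d - t) * g₁ t - (d - t) * g₂ t) - (d - s₂) * (g₁ t - g₂ t))
        (((hc1.sub hc2).sub (continuous_const.mul (hg₁c.sub hg₂c))).intervalIntegrable _ _)
        _ hs₂d
      intro x hx
      have h1 : g₁ x - g₂ x < 0 := by linarith [hglt x]
      have h2 : (x - s₂) > 0 := by linarith [hx.1]
      nlinarith [mul_pos h2 (by linarith : (0:ℝ) < g₂ x - g₁ x)]
    have hsub : (∫ t in s₂..d,
        (((d - t) * g₁ t - (d - t) * g₂ t) - (d - s₂) * (g₁ t - g₂ t)))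
        = (∫ t in s₂..d, ((d - t) * g₁ t - (d - t) * g₂ t))
          - (d - s₂) * ((∫ t in s₂..d, g₁ t) - (∫ t in s₂..d, g₂ t)) := by
      rw [intervalIntegral.integral_sub
        (f := fun t => (d - t) * g₁ t - (d - t) * g₂ t) (g := fun t => (d - s₂) * (g₁ t - g₂ t))
        ((hc1.sub hc2).intervalIntegrable _ _)
        ((continuous_const.mul (hg₁c.sub hg₂c)).intervalIntegrable _ _),
        intervalIntegral.integral_const_mul, intervalIntegral.integral_sub
        (hg₁c.intervalIntegrable _ _) (hg₂c.intervalIntegrable _ _)]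
    rw [hsub, hC₂] at hpos
    have hg1d : (∫ t in s₂..d, g₁ t) = -A := by linarith
    rw [hg1d] at hpos
    linarith
  -- assemble
  have hsplit₁ : (∫ t in s₁..d, (d - t) * g₁ t)
      = (∫ t in s₁..s₂, (d - t) * g₁ t) + ∫ t in s₂..d, (d - t) * g₁ t := by
    rw [intervalIntegral.integral_add_adjacent_intervals
      (hc1.intervalIntegrable _ _)
      (hc1.intervalIntegrable _ _)]
  have hdiff : (∫ t in s₂..d, ((d - t) * g₁ t - (d - t) * g₂ t))
      = (∫ t in s₂..d, (d - t) * g₁ t) - ∫ t in s₂..d, (d - t) * g₂ t :=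
    intervalIntegral.integral_sub
      (hc1.intervalIntegrable _ _)
      (hc2.intervalIntegrable _ _)
  have hmain : (∫ y in s₂..d, u₂ y) < (∫ y in s₁..d, u₁ y) := by
    rw [hP1, hP2, hsplit₁]
    rw [hdiff] at key2
    linarith
  exact ⟨hmain, fun ⟨h1, h2⟩ => by rw [h1, h2] at hmain; exact lt_irrefl 1 hmain⟩
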